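/- The sequence (q^{−k} b_k)_{k≥0} is square summable (i.e., Σ_{k≥0} q^{−2k} b_k² < ∞) if and only if max(a, b) < q. -/

import Mathlib

set_option maxHeartbeats 1000000 in
theorem square_summable_iff_of_recurrence_sequence
    (q a b : ℝ) (hq0 : 0 < q) (hq1 : q < 1) (ha : 0 < a) (hb : 0 < b)
    (c : ℕ → ℝ) (hc : ∀ k : ℕ, 1 ≤ k → c k = (Real.sqrt (1 - q ^ (2 * k)))⁻¹)
    (B : ℕ → ℝ) (hB0 : B 0 = 1) (hB1 : B 1 = (a + b) * c 1)
    (hBrec : ∀ k : ℕ, 1 ≤ k →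
      B (k + 1) = (a + b) * c (k + 1) * B k - (a * b) * (c (k + 1) / c k) * B (k - 1)) :
    Summable (fun k : ℕ => ((q ^ k)⁻¹ * B k) ^ 2) ↔ max a b < q := by
  set m : ℝ := max a b with hm_def
  set n : ℝ := min a b with hn_def
  have hm : 0 < m := lt_max_of_lt_left ha
  have hn : 0 < n := lt_min ha hb
  have hnm : n ≤ m := min_le_max
  have hmn_add : m + n = a + b := max_add_min a b
  have hmn_mul : m * n = a * b := max_mul_min a b
  have hq2 : 0 < q ^ 2 := by positivity
  have hq21 : q ^ 2 < 1 := by nlinarith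
  -- basic facts about 1 - q^(2k)
  have hxk : ∀ k : ℕ, 1 ≤ k → q ^ (2 * k) ≤ q ^ 2 := by
    intro k hk
    rw [pow_mul]
    calc (q ^ 2) ^ k ≤ (q ^ 2) ^ 1 := pow_le_pow_of_le_one hq2.le hq21.le hk
      _ = q ^ 2 := pow_one _
  have hxpos : ∀ k : ℕ, 1 ≤ k → 0 < 1 - q ^ (2 * k) := by
    intro k hk; have := hxk k hk; linarith
  have hxle1 : ∀ k : ℕ, 1 ≤ k → 1 - q ^ (2 * k) ≤ 1 := by
    intro k hk; have : 0 < q ^ (2 * k) := by positivity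
    linarith
  set s : ℕ → ℝ := fun k => Real.sqrt (1 - q ^ (2 * k)) with hs_def
  have hs_pos : ∀ k : ℕ, 1 ≤ k → 0 < s k := fun k hk => Real.sqrt_pos.mpr (hxpos k hk)
  have hs_le1 : ∀ k : ℕ, 1 ≤ k → s k ≤ 1 := by
    intro k hk
    rw [hs_def]
    calc Real.sqrt (1 - q ^ (2*k)) ≤ Real.sqrt 1 := Real.sqrt_le_sqrt (hxle1 k hk)
      _ = 1 := Real.sqrt_one
  have hs_sq : ∀ k : ℕ, 1 ≤ k → s k * s k = 1 - q ^ (2 * k) := by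
    intro k hk; exact Real.mul_self_sqrt (hxpos k hk).le
  set P : ℕ → ℝ := fun k => ∏ j ∈ Finset.range k, s (j + 1) with hP_def
  have hP_pos : ∀ k, 0 < P k := by
    intro k; exact Finset.prod_pos (fun j _ => hs_pos (j+1) (by omega))
  have hP_le1 : ∀ k, P k ≤ 1 := by
    intro k
    exact Finset.prod_le_one (fun j _ => (hs_pos (j+1) (by omega)).le)
      (fun j _ => hs_le1 (j+1) (by omega))
  set d : ℕ → ℝ := fun k => B k * P k with hd_def
  have hd0 : d 0 = 1 := by simp [hd_def, hP_def, hB0]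
  have hd1 : d 1 = m + n := by
    have h1 : (1:ℕ) ≤ 1 := le_refl 1
    simp only [hd_def, hP_def, Finset.prod_range_one, hB1, hc 1 h1, hmn_add]
    rw [mul_assoc, inv_mul_cancel₀ (ne_of_gt (hs_pos 1 h1)), mul_one]
  have hdrec : ∀ j : ℕ, d (j + 2) = (m + n) * d (j + 1) - m * n * (1 - q ^ (2 * (j + 1))) * d j := by
    intro j
    have h1 : (1:ℕ) ≤ j + 1 := by omega
    have h2 : (1:ℕ) ≤ j + 2 := by omega
    have hs1 : s (j + 1) ≠ 0 := ne_of_gt (hs_pos _ h1)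
    have hs2 : s (j + 2) ≠ 0 := ne_of_gt (hs_pos _ h2)
    have hP2 : P (j + 2) = P j * s (j + 1) * s (j + 2) := by
      simp [hP_def, Finset.prod_range_succ, mul_assoc]
    have hP1 : P (j + 1) = P j * s (j + 1) := by
      simp [hP_def, Finset.prod_range_succ]
    have hB2 := hBrec (j + 1) h1
    simp only [Nat.add_sub_cancel] at hB2
    calc d (j + 2) = B (j + 2) * (P j * s (j + 1) * s (j + 2)) := by
          rw [show d (j+2) = B (j+2) * P (j+2) from rfl, hP2]
      _ = ((a + b) * (s (j+2))⁻¹ * B (j+1) - a * b * ((s (j+2))⁻¹ / (s (j+1))⁻¹) * B j)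
            * (P j * s (j + 1) * s (j + 2)) := by
          rw [hB2, hc (j+2) h2, hc (j+1) h1]
      _ = (a + b) * (B (j+1) * (P j * s (j+1))) - a * b * (s (j+1) * s (j+1)) * (B j * P j) := by
          field_simp
      _ = (m + n) * d (j + 1) - m * n * (1 - q ^ (2 * (j + 1))) * d j := by
          rw [hs_sq (j+1) h1, hmn_add, hmn_mul, show d (j+1) = B (j+1) * P (j+1) from rfl,
            show d j = B j * P j from rfl, hP1]
  set D : ℕ → ℝ := fun k => ∏ j ∈ Finset.range k, (1 + (j:ℝ) * q ^ (2 * j)) with hD_def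
  have hD_pos : ∀ k, 0 < D k := fun k => Finset.prod_pos (fun j _ => by positivity)
  have hD_succ : ∀ k : ℕ, D (k+1) = D k * (1 + (k:ℝ) * q ^ (2*k)) := by
    intro k; simp [hD_def, Finset.prod_range_succ]
  have hD_mono : ∀ k : ℕ, D k ≤ D (k+1) := by
    intro k; rw [hD_succ]
    nlinarith [hD_pos k, mul_nonneg (Nat.cast_nonneg k : (0:ℝ) ≤ k) (le_of_lt (pow_pos hq0 (2*k)))]
  have hD0 : D 0 = 1 := by simp [hD_def]
  have hD1 : D 1 = 1 := by simp [hD_def]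
  have key : ∀ k : ℕ, 0 < d k ∧ m * d k ≤ d (k+1) ∧
      d (k+1) - m * d k ≤ m^(k+1) * D (k+1) ∧ d k ≤ ((k:ℝ)+1) * m^k * D k := by
    intro k
    induction k with
    | zero =>
      refine ⟨by rw [hd0]; norm_num, ?_, ?_, ?_⟩
      · rw [hd0, hd1]; linarith
      · rw [hd0, hd1, hD1]; ring_nf; linarith
      · rw [hd0, hD0]; norm_num
    | succ k ih =>
      obtain ⟨hpos, hstep, hebd, hdbd⟩ := ih
      have hpos1 : 0 < d (k+1) := lt_of_lt_of_le (mul_pos hm hpos) hstep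
      have hrec := hdrec k
      set X := q ^ (2 * (k+1)) with hX_def
      have hX0 : 0 < X := pow_pos hq0 _
      have hX1 : X < 1 := by
        rw [hX_def]; exact pow_lt_one₀ hq0.le hq1 (by omega)
      have hDs : D (k+2) = D (k+1) * (1 + ((k:ℝ)+1) * X) := by
        rw [hD_succ (k+1)]; push_cast; rw [hX_def]
      have hmk : (0:ℝ) < m ^ k := pow_pos hm k
      have e2 : d (k+2) - m * d (k+1) = n * (d (k+1) - m * d k) + m * n * X * d k := by
        rw [hrec]; ring
      have he0 : 0 ≤ d (k+1) - m * d k := by linarith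
      refine ⟨hpos1, ?_, ?_, ?_⟩
      · show m * d (k+1) ≤ d (k+2)
        have p1 : 0 ≤ n * (d (k+1) - m * d k) := mul_nonneg hn.le he0
        have p2 : 0 ≤ m * n * X * d k := by positivity
        linarith
      · show d (k+2) - m * d (k+1) ≤ m^(k+2) * D (k+2)
        have t1 : n * (d (k+1) - m * d k) ≤ m * (m^(k+1) * D (k+1)) :=
          mul_le_mul hnm hebd he0 hm.le
        have h1 : n * d k ≤ m * (((k:ℝ)+1) * m^k * D k) :=
          mul_le_mul hnm hdbd hpos.le hm.le
        have t2 : m * n * X * d k ≤ m * m * X * (((k:ℝ)+1) * m^k * D k) := by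
          calc m * n * X * d k = (m * X) * (n * d k) := by ring
            _ ≤ (m * X) * (m * (((k:ℝ)+1) * m^k * D k)) :=
                mul_le_mul_of_nonneg_left h1 (by positivity)
            _ = m * m * X * (((k:ℝ)+1) * m^k * D k) := by ring
        have hd' : D k ≤ D (k+1) := hD_mono k
        have hc1 : (0:ℝ) ≤ m^(k+2) * (((k:ℝ)+1) * X) := by positivity
        have hd'' : (m^(k+2) * (((k:ℝ)+1) * X)) * D k ≤ (m^(k+2) * (((k:ℝ)+1) * X)) * D (k+1) :=
          mul_le_mul_of_nonneg_left hd' hc1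
        calc d (k+2) - m * d (k+1) = n * (d (k+1) - m * d k) + m * n * X * d k := e2
          _ ≤ m * (m^(k+1) * D (k+1)) + m * m * X * (((k:ℝ)+1) * m^k * D k) := by linarith
          _ = m^(k+2) * D (k+1) + (m^(k+2) * (((k:ℝ)+1) * X)) * D k := by ring
          _ ≤ m^(k+2) * D (k+1) + (m^(k+2) * (((k:ℝ)+1) * X)) * D (k+1) := by linarith
          _ = m^(k+2) * (D (k+1) * (1 + ((k:ℝ)+1) * X)) := by ring
          _ = m^(k+2) * D (k+2) := by rw [hDs]
      · show d (k+1) ≤ ((↑(k+1):ℝ)+1) * m^(k+1) * D (k+1)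
        have h1 : m * d k ≤ m * (((k:ℝ)+1) * m^k * D k) :=
          mul_le_mul_of_nonneg_left hdbd hm.le
        have hd' : D k ≤ D (k+1) := hD_mono k
        have h2 : d (k+1) ≤ m * (((k:ℝ)+1) * m^k * D k) + m^(k+1) * D (k+1) := by linarith
        have h3 : (((k:ℝ)+1) * m^(k+1)) * D k ≤ (((k:ℝ)+1) * m^(k+1)) * D (k+1) :=
          mul_le_mul_of_nonneg_left hd' (by positivity)
        push_cast
        calc d (k+1) ≤ m * (((k:ℝ)+1) * m^k * D k) + m^(k+1) * D (k+1) := h2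
          _ = (((k:ℝ)+1) * m^(k+1)) * D k + m^(k+1) * D (k+1) := by ring
          _ ≤ (((k:ℝ)+1) * m^(k+1)) * D (k+1) + m^(k+1) * D (k+1) := by linarith
          _ = ((k:ℝ)+1+1) * m^(k+1) * D (k+1) := by ring
  have hd_pos : ∀ k, 0 < d k := fun k => (key k).1
  have hd_lb : ∀ k : ℕ, m ^ k ≤ d k := by
    intro k
    induction k with
    | zero => rw [hd0, pow_zero]
    | succ k ih =>
      calc m ^ (k+1) = m * m ^ k := by ring
        _ ≤ m * d k := mul_le_mul_of_nonneg_left ih hm.le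
        _ ≤ d (k+1) := (key k).2.1
    -- summability constants
  have hnormq2 : ‖q^2‖ < 1 := by rw [Real.norm_eq_abs, abs_of_pos hq2]; exact hq21
  have hgsum : Summable (fun j : ℕ => (q^2)^j) := summable_geometric_of_lt_one hq2.le hq21
  have hjsum : Summable (fun j : ℕ => (j:ℝ) * (q^2)^j) := by
    have h := summable_pow_mul_geometric_of_norm_lt_one 1 hnormq2
    simpa using h
  set T : ℝ := ∑' j : ℕ, (j:ℝ) * (q^2)^j with hT_def
  set E : ℝ := Real.exp T with hE_def
  have hE_pos : 0 < E := Real.exp_pos T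
  have hD_le : ∀ k, D k ≤ E := by
    intro k
    calc D k ≤ ∏ j ∈ Finset.range k, Real.exp ((j:ℝ) * (q^2)^j) := by
          apply Finset.prod_le_prod
          · intro j _; positivity
          · intro j _
            rw [show q^(2*j) = (q^2)^j from pow_mul q 2 j]
            calc 1 + (j:ℝ)*(q^2)^j = (j:ℝ)*(q^2)^j + 1 := by ring
              _ ≤ Real.exp ((j:ℝ)*(q^2)^j) := Real.add_one_le_exp _
      _ = Real.exp (∑ j ∈ Finset.range k, (j:ℝ)*(q^2)^j) := (Real.exp_sum _ _).symm
      _ ≤ E := by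
          rw [hE_def, hT_def]
          exact Real.exp_le_exp.mpr (Summable.sum_le_tsum _ (fun j _ => by positivity) hjsum)
  set C1 : ℝ := (1 - q^2)⁻¹ with hC1_def
  have hC1 : 0 < C1 := by rw [hC1_def]; exact inv_pos.mpr (by linarith)
  have hgsum' : Summable (fun j : ℕ => (q^2)^(j+1)) := by
    apply Summable.congr (hgsum.mul_left (q^2))
    intro j; rw [← pow_succ']
  set T2 : ℝ := ∑' j : ℕ, (q^2)^(j+1) with hT2_def
  set F : ℝ := Real.exp (C1 * T2) with hF_def
  have hF_pos : 0 < F := Real.exp_pos _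
  set G : ℕ → ℝ := fun k => ∏ j ∈ Finset.range k, (1 - q^(2*(j+1)))⁻¹ with hG_def
  have hG_pos : ∀ k, 0 < G k := by
    intro k; exact Finset.prod_pos (fun j _ => inv_pos.mpr (hxpos (j+1) (by omega)))
  have hG_ge1 : ∀ k, 1 ≤ G k := by
    intro k
    rw [show G k = ∏ j ∈ Finset.range k, (1 - q^(2*(j+1)))⁻¹ from rfl]
    calc (1:ℝ) = ∏ j ∈ Finset.range k, 1 := by simp
      _ ≤ ∏ j ∈ Finset.range k, (1 - q^(2*(j+1)))⁻¹ := by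
          apply Finset.prod_le_prod (by simp)
          intro j _
          exact one_le_inv_iff₀.mpr ⟨hxpos (j+1) (by omega), hxle1 (j+1) (by omega)⟩
  have hG_le : ∀ k, G k ≤ F := by
    intro k
    calc G k ≤ ∏ j ∈ Finset.range k, Real.exp (C1 * (q^2)^(j+1)) := by
          apply Finset.prod_le_prod
          · intro j _; exact (inv_pos.mpr (hxpos (j+1) (by omega))).le
          · intro j _
            set x : ℝ := q^(2*(j+1)) with hx_def
            have hx0 : 0 < x := pow_pos hq0 _
            have hxq : x ≤ q^2 := hxk (j+1) (by omega)
            have h1x : 0 < 1 - x := hxpos (j+1) (by omega)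
            have hxx : x = (q^2)^(j+1) := by rw [hx_def, pow_mul]
            have hkey : 1 ≤ (1 + C1*x) * (1-x) := by
              have hinv : C1 * (1 - q^2) = 1 := inv_mul_cancel₀ (by linarith)
              have h2 : C1 * (1 - q^2) ≤ C1 * (1 - x) :=
                mul_le_mul_of_nonneg_left (by linarith) hC1.le
              nlinarith [hx0.le]
            have hineq : (1 - x)⁻¹ ≤ 1 + C1 * x := by
              rw [← one_div]
              exact (div_le_iff₀ h1x).mpr (by linarith [hkey])
            calc (1 - x)⁻¹ ≤ 1 + C1 * x := hineq
              _ = C1 * x + 1 := by ring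
              _ ≤ Real.exp (C1 * x) := Real.add_one_le_exp _
              _ = Real.exp (C1 * (q^2)^(j+1)) := by rw [hxx]
      _ = Real.exp (∑ j ∈ Finset.range k, C1 * (q^2)^(j+1)) := (Real.exp_sum _ _).symm
      _ ≤ F := by
          rw [hF_def, hT2_def]
          apply Real.exp_le_exp.mpr
          rw [← Finset.mul_sum]
          exact mul_le_mul_of_nonneg_left
            (Summable.sum_le_tsum _ (fun j _ => by positivity) hgsum') hC1.le
  have hPsq : ∀ k, (P k)^2 = ∏ j ∈ Finset.range k, (1 - q^(2*(j+1))) := by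
    intro k
    rw [show P k = ∏ j ∈ Finset.range k, s (j+1) from rfl, ← Finset.prod_pow]
    exact Finset.prod_congr rfl (fun j _ => Real.sq_sqrt (hxpos (j+1) (by omega)).le)
  have hPinv : ∀ k, ((P k)^2)⁻¹ = G k := by
    intro k
    rw [hPsq, show G k = ∏ j ∈ Finset.range k, (1 - q^(2*(j+1)))⁻¹ from rfl,
      ← Finset.prod_inv_distrib]
  have hBP : ∀ k, B k = d k / P k := by
    intro k
    rw [eq_div_iff (ne_of_gt (hP_pos k))]
  have hterm : ∀ k, ((q^k)⁻¹ * B k)^2 = ((q^k)⁻¹)^2 * ((d k)^2 * G k) := by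
    intro k
    rw [hBP k, ← hPinv k, mul_pow, div_pow, div_eq_mul_inv]
  constructor
  · -- summable → m < q
    intro hsum
    by_contra hcon
    push_neg at hcon
    have h1le : ∀ k : ℕ, (1:ℝ) ≤ ((q^k)⁻¹ * B k)^2 := by
      intro k
      rw [hterm k]
      have hqk : 0 < q^k := pow_pos hq0 k
      have hdq : q^k ≤ d k := le_trans (pow_le_pow_left₀ hq0.le hcon k) (hd_lb k)
      have h1 : 1 ≤ (q^k)⁻¹ * d k := by
        rw [← inv_mul_cancel₀ (ne_of_gt hqk)]
        exact mul_le_mul_of_nonneg_left hdq (inv_pos.mpr hqk).le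
      have h2 : 1 ≤ ((q^k)⁻¹)^2 * (d k)^2 := by
        calc (1:ℝ) = 1^2 := by norm_num
          _ ≤ ((q^k)⁻¹ * d k)^2 := pow_le_pow_left₀ (by norm_num) h1 2
          _ = ((q^k)⁻¹)^2 * (d k)^2 := mul_pow _ _ 2
      calc (1:ℝ) ≤ ((q^k)⁻¹)^2 * (d k)^2 := h2
        _ = ((q^k)⁻¹)^2 * (d k)^2 * 1 := by ring
        _ ≤ ((q^k)⁻¹)^2 * (d k)^2 * G k := by
            have := mul_le_mul_of_nonneg_left (hG_ge1 k) (by positivity : (0:ℝ) ≤ ((q^k)⁻¹)^2 * (d k)^2)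
            linarith
        _ = ((q^k)⁻¹)^2 * ((d k)^2 * G k) := by ring
    have h0 := hsum.tendsto_atTop_zero
    have : (1:ℝ) ≤ 0 := ge_of_tendsto' h0 h1le
    linarith
  · -- m < q → summable
    intro hmlt
    set u : ℝ := (m/q)^2 with hu_def
    have hmq1 : m/q < 1 := (div_lt_one hq0).mpr hmlt
    have hmq0 : 0 < m/q := div_pos hm hq0
    have hu0 : 0 < u := by positivity
    have hu1 : u < 1 := pow_lt_one₀ hmq0.le hmq1 (by norm_num)
    have hunorm : ‖u‖ < 1 := by rw [Real.norm_eq_abs, abs_of_pos hu0]; exact hu1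
    have hS : Summable (fun k : ℕ => ((k:ℝ)+1)^2 * u^k) := by
      have h2 := summable_pow_mul_geometric_of_norm_lt_one 2 hunorm
      have h1 := summable_pow_mul_geometric_of_norm_lt_one 1 hunorm
      have h0 : Summable (fun k : ℕ => u^k) := summable_geometric_of_lt_one hu0.le hu1
      apply Summable.congr ((h2.add (h1.mul_left 2)).add h0)
      intro k
      push_cast
      ring
    have hbnd : ∀ k : ℕ, ((q^k)⁻¹ * B k)^2 ≤ (F * E^2) * (((k:ℝ)+1)^2 * u^k) := by
      intro k
      rw [hterm k]
      have hqk : 0 < q^k := pow_pos hq0 k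
      have hd_le : d k ≤ ((k:ℝ)+1) * m^k * E :=
        le_trans (key k).2.2.2 (mul_le_mul_of_nonneg_left (hD_le k) (by positivity))
      have hd2 : (d k)^2 ≤ (((k:ℝ)+1) * m^k * E)^2 := pow_le_pow_left₀ (hd_pos k).le hd_le 2
      have hmain : (d k)^2 * G k ≤ (((k:ℝ)+1) * m^k * E)^2 * F :=
        mul_le_mul hd2 (hG_le k) (hG_pos k).le (by positivity)
      calc ((q^k)⁻¹)^2 * ((d k)^2 * G k) ≤ ((q^k)⁻¹)^2 * ((((k:ℝ)+1) * m^k * E)^2 * F) :=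
            mul_le_mul_of_nonneg_left hmain (by positivity)
        _ = (F * E^2) * (((k:ℝ)+1)^2 * u^k) := by
            rw [hu_def]
            rw [show ((m/q)^2)^k = (m^k)^2 * ((q^k)⁻¹)^2 by
              rw [pow_right_comm, div_pow, div_pow, div_eq_mul_inv, ← inv_pow]]
            ring
    exact Summable.of_nonneg_of_le (fun k => sq_nonneg _) hbnd (hS.mul_left _)
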